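/- arXiv:2206.03889 — 2 statements merged into one kernel-verified Lean document; each statement's English description precedes it below -/
import Mathlib

section
/- For the two-dimensional compressible Euler equations with adiabatic constant γ > 1: on the domain of states U = (ρ, m₁, m₂, E) ∈ ℝ⁴ with ρ > 0 and p := (γ−1)·(E − (m₁² + m₂²)/(2ρ)) > 0, the Jacobian of the entropy variable map v(U) := −(ρ·p)^{−γ/(γ+1)}·(E, −m₁, −m₂, ρ)ᵀ equals (γ(γ−1)/(γ+1))·(ρp)^{−(2γ+1)/(γ+1)}·w·wᵀ − (ρp)^{−γ/(γ+1)}·K, where w := (E, −m₁, −m₂, ρ)ᵀ and K is the 4×4 matrix [[0,0,0,1],[0,−1,0,0],[0,0,−1,0],[1,0,0,0]]. -/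
open Matrix ContinuousLinearMap

/-- The Jacobian of the Euler entropy variable map
`v(U) = -(ρp)^{-γ/(γ+1)}·(E,-m₁,-m₂,ρ)ᵀ` equals
`(γ(γ-1)/(γ+1))·(ρp)^{-(2γ+1)/(γ+1)}·w wᵀ - (ρp)^{-γ/(γ+1)}·K` with
`w = (E,-m₁,-m₂,ρ)ᵀ` and `K = [[0,0,0,1],[0,-1,0,0],[0,0,-1,0],[1,0,0,0]]`. -/
theorem stmt_15 (gam : ℝ) (hgam : 1 < gam)
    (p : (Fin 4 → ℝ) → ℝ)
    (hp : ∀ U : Fin 4 → ℝ,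
      p U = (gam - 1) * (U 3 - ((U 1) ^ 2 + (U 2) ^ 2) / (2 * U 0)))
    (v : (Fin 4 → ℝ) → (Fin 4 → ℝ))
    (hv : ∀ U : Fin 4 → ℝ,
      v U = (-((U 0 * p U) ^ (-gam / (gam + 1)))) • ![U 3, -U 1, -U 2, U 0])
    (K : Matrix (Fin 4) (Fin 4) ℝ)
    (hK : K = Matrix.of ![![0, 0, 0, 1], ![0, -1, 0, 0], ![0, 0, -1, 0], ![1, 0, 0, 0]]) :
    ∀ U : Fin 4 → ℝ, 0 < U 0 → 0 < p U →
      ∃ Dv : (Fin 4 → ℝ) →L[ℝ] (Fin 4 → ℝ), HasFDerivAt v Dv U ∧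
        ∀ y : Fin 4 → ℝ,
          Dv y = (((gam * (gam - 1) / (gam + 1)) * (U 0 * p U) ^ (-(2 * gam + 1) / (gam + 1))) •
              Matrix.of (fun i j => ![U 3, -U 1, -U 2, U 0] i * ![U 3, -U 1, -U 2, U 0] j)
            - ((U 0 * p U) ^ (-gam / (gam + 1))) • K).mulVec y := by
  intro U hρ hpU
  have hgam1 : (0:ℝ) < gam + 1 := by linarith
  set a : ℝ := gam / (gam + 1) with ha
  set g : (Fin 4 → ℝ) → ℝ :=
    fun y => (gam - 1) * (y 0 * y 3 - 2⁻¹ * (y 1 * y 1 + y 2 * y 2)) with hgdef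
  have hgeq : ∀ y : Fin 4 → ℝ, y 0 ≠ 0 → y 0 * p y = g y := by
    intro y hy
    rw [hp]; simp only [hgdef]; field_simp
  have hgU : U 0 * p U = g U := hgeq U (ne_of_gt hρ)
  have hgpos : 0 < g U := hgU ▸ mul_pos hρ hpU
  -- the linear part w = K.mulVec
  have hwK : ∀ y : Fin 4 → ℝ, (![y 3, -y 1, -y 2, y 0] : Fin 4 → ℝ) = K.mulVec y := by
    intro y
    funext i
    fin_cases i <;>
      simp [hK, Matrix.mulVec, Fin.sum_univ_four, dotProduct]
  -- derivative of g
  have h0 := hasFDerivAt_apply (𝕜 := ℝ) (F' := fun _ : Fin 4 => ℝ) 0 U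
  have h1 := hasFDerivAt_apply (𝕜 := ℝ) (F' := fun _ : Fin 4 => ℝ) 1 U
  have h2 := hasFDerivAt_apply (𝕜 := ℝ) (F' := fun _ : Fin 4 => ℝ) 2 U
  have h3 := hasFDerivAt_apply (𝕜 := ℝ) (F' := fun _ : Fin 4 => ℝ) 3 U
  have hg3 : HasFDerivAt g _ U :=
    (((h0.mul h3).sub (((h1.mul h1).add (h2.mul h2)).const_mul ((2:ℝ)⁻¹))).const_mul (gam - 1))
  -- derivative of the scalar coefficient
  have hc := (hg3.rpow_const (p := -a) (Or.inl hgpos.ne')).neg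
  -- derivative of the vector part
  set LK : (Fin 4 → ℝ) →L[ℝ] (Fin 4 → ℝ) :=
    LinearMap.toContinuousLinearMap (Matrix.mulVecLin K) with hLK
  have hLKapp : ∀ y, LK y = K.mulVec y := fun y => rfl
  have hw : HasFDerivAt (fun y : Fin 4 → ℝ => (![y 3, -y 1, -y 2, y 0] : Fin 4 → ℝ)) LK U := by
    have : (fun y : Fin 4 → ℝ => (![y 3, -y 1, -y 2, y 0] : Fin 4 → ℝ)) = fun y => LK y := by
      funext y; rw [hwK, hLKapp]
    rw [this]
    exact LK.hasFDerivAt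
  have hF := hc.smul hw
  have heq : v =ᶠ[nhds U] (fun y => -g y ^ (-a) • ![y 3, -y 1, -y 2, y 0]) := by
    have hopen : IsOpen {y : Fin 4 → ℝ | 0 < y 0} := isOpen_lt continuous_const (continuous_apply 0)
    filter_upwards [hopen.mem_nhds hρ] with y hy
    rw [hv]
    simp only [ha]
    rw [hgeq y (ne_of_gt hy), neg_div]
  have hFv := hF.congr_of_eventuallyEq heq
  refine ⟨_, hFv, ?_⟩
  · intro y
    funext i
    have e1 : -(2 * gam + 1) / (gam + 1) = -a - 1 := by
      rw [ha]; field_simp; ring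
    have e2 : -gam / (gam + 1) = -a := by rw [ha]; ring
    rw [hgU, e1, e2]
    fin_cases i <;>
    · simp [Matrix.mulVec, dotProduct, Fin.sum_univ_four, hK, Matrix.sub_apply,
        Matrix.smul_apply, ContinuousLinearMap.add_apply, ContinuousLinearMap.smul_apply,
        ContinuousLinearMap.smulRight_apply, ContinuousLinearMap.sub_apply, hLKapp,
        ContinuousLinearMap.proj_apply, ContinuousLinearMap.neg_apply]
      ring
end

section
/- Let γ > 1, let ρ > 0, u, v ∈ ℝ, and E ∈ ℝ be such that p := (γ−1)·(E − ρ·(u²+v²)/2) > 0; set k := (u²+v²)/2. Then the 4×4 matrix A₀ := γ·ρ·(ρ·p)^{−1/(γ+1)}·[[ρ, ρu, ρv, ρk + p/(γ(γ−1))], [ρu, E − p/(γ(γ−1)) + ρ(u²−v²)/2, ρuv, uE], [ρv, ρuv, E − p/(γ(γ−1)) − ρ(u²−v²)/2, vE], [ρk + p/(γ(γ−1)), Eu, Ev, E²/ρ]] is the inverse of the matrix B := (γ(γ−1)/(γ+1))·(ρp)^{−(2γ+1)/(γ+1)}·w·wᵀ − (ρp)^{−γ/(γ+1)}·K, where w :=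 (E, −ρu, −ρv, ρ)ᵀ and K := [[0,0,0,1],[0,−1,0,0],[0,0,−1,0],[1,0,0,0]]; i.e. A₀·B = I₄ and B·A₀ = I₄. -/
open Matrix

set_option maxHeartbeats 8000000

/-- For the 2D Euler equations, the explicit matrix `A₀` from the paper is the inverse
of the Jacobian `B = ∂_U v` of the entropy variables, i.e. `A₀ B = I` and `B A₀ = I`. -/
theorem stmt_16 (gam : ℝ) (hgam : 1 < gam)
    (ρ u v E : ℝ) (hρ : 0 < ρ)
    (k : ℝ) (hk : k = (u ^ 2 + v ^ 2) / 2)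
    (p : ℝ) (hp : p = (gam - 1) * (E - ρ * (u ^ 2 + v ^ 2) / 2)) (hppos : 0 < p)
    (w : Fin 4 → ℝ) (hw : w = ![E, -(ρ * u), -(ρ * v), ρ])
    (K : Matrix (Fin 4) (Fin 4) ℝ)
    (hK : K = Matrix.of ![![0, 0, 0, 1], ![0, -1, 0, 0], ![0, 0, -1, 0], ![1, 0, 0, 0]])
    (A₀ : Matrix (Fin 4) (Fin 4) ℝ)
    (hA : A₀ = (gam * ρ * (ρ * p) ^ (-1 / (gam + 1))) •
      Matrix.of
        ![![ρ, ρ * u, ρ * v, ρ * k + p / (gam * (gam - 1))],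
          ![ρ * u, E - p / (gam * (gam - 1)) + ρ * (u ^ 2 - v ^ 2) / 2, ρ * u * v, u * E],
          ![ρ * v, ρ * u * v, E - p / (gam * (gam - 1)) - ρ * (u ^ 2 - v ^ 2) / 2, v * E],
          ![ρ * k + p / (gam * (gam - 1)), E * u, E * v, E ^ 2 / ρ]])
    (B : Matrix (Fin 4) (Fin 4) ℝ)
    (hB : B = ((gam * (gam - 1) / (gam + 1)) * (ρ * p) ^ (-(2 * gam + 1) / (gam + 1))) •
        Matrix.of (fun i j => w i * w j)
      - ((ρ * p) ^ (-gam / (gam + 1))) • K) :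
    A₀ * B = 1 ∧ B * A₀ = 1 := by

  have hγ1 : gam + 1 ≠ 0 := by linarith
  have hγ0 : gam ≠ 0 := by linarith
  have hγm : gam - 1 ≠ 0 := by linarith
  have hρ' : ρ ≠ 0 := ne_of_gt hρ
  have hp' : p ≠ 0 := ne_of_gt hppos
  have hs : 0 < ρ * p := mul_pos hρ hppos
  have hE : E = p / (gam - 1) + ρ * (u ^ 2 + v ^ 2) / 2 := by
    field_simp
    linarith [hp]
  set a : ℝ := (ρ * p) ^ (-1 / (gam + 1)) with haa
  have ha : 0 < a := Real.rpow_pos_of_pos hs _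
  have ha' : a ≠ 0 := ne_of_gt ha
  have hab : a * (ρ * p) ^ (-(2 * gam + 1) / (gam + 1)) = ((ρ * p) ^ 2)⁻¹ := by
    rw [haa, ← Real.rpow_add hs, ← Real.rpow_natCast (ρ * p) 2,
      ← Real.rpow_neg hs.le]
    congr 1
    push_cast
    field_simp
    ring
  have hac : a * (ρ * p) ^ (-gam / (gam + 1)) = (ρ * p)⁻¹ := by
    rw [haa, ← Real.rpow_add hs, ← Real.rpow_neg_one (ρ * p)]
    congr 1
    field_simp
    ring
  have hb : (ρ * p) ^ (-(2 * gam + 1) / (gam + 1)) = ((ρ * p) ^ 2)⁻¹ * a⁻¹ := by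
    rw [eq_mul_inv_iff_mul_eq₀ ha', mul_comm]; exact hab
  have hc : (ρ * p) ^ (-gam / (gam + 1)) = (ρ * p)⁻¹ * a⁻¹ := by
    rw [eq_mul_inv_iff_mul_eq₀ ha', mul_comm]; exact hac
  subst hw hK hA hB hk hE
  rw [hb, hc]
  constructor <;>
  · ext i j
    fin_cases i <;> fin_cases j <;>
    · simp only [Matrix.mul_apply, Fin.sum_univ_four, Matrix.sub_apply, Matrix.smul_apply,
        Matrix.of_apply, smul_eq_mul, Matrix.cons_val', Matrix.cons_val_zero, Matrix.cons_val_one,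
        Matrix.head_cons, Matrix.empty_val', Matrix.cons_val_fin_one, Matrix.head_fin_const,
        Matrix.cons_val_two, Matrix.cons_val_three, Matrix.tail_cons, Matrix.one_apply,
        Fin.isValue, Matrix.cons_val_four]
      norm_num [Fin.ext_iff]
      field_simp
      ring
end
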